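/- Let (Y, τ) be a topological space and let (σ_m)_{m∈ℕ} be a sequence of topologies on Y with σ_m ⊆ τ for all m and with (Y, σ_m) metrizable for all m. Then there exists a topology σ on Y with σ ⊆ τ, with σ_m ⊆ σ for all m, and with (Y, σ) metrizable. -/

import Mathlib

open Set Topology

lemma aux_metr {Y : Type*} (σ : ℕ → TopologicalSpace Y)
    (hmetr : ∀ m, @TopologicalSpace.MetrizableSpace Y (σ m)) :
    @TopologicalSpace.MetrizableSpace Y (⨅ m, σ m) := by
  have hm : ∀ m, ∃ d : MetricSpace Y, d.toUniformSpace.toTopologicalSpace = σ m :=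
    fun m => ⟨@TopologicalSpace.metrizableSpaceMetric Y (σ m) (hmetr m), rfl⟩
  choose d hd using hm
  let M : MetricSpace (∀ _ : ℕ, Y) := @PiCountable.metricSpace ℕ _ (fun _ => Y) d
  have hinj : Function.Injective (fun (y : Y) (_ : ℕ) => y) :=
    fun a b h => congrFun h 0
  let dY : MetricSpace Y := M.induced _ hinj
  suffices hsuff : dY.toUniformSpace.toTopologicalSpace = ⨅ m, σ m by
    rw [← hsuff]; letI := dY; infer_instance
  have hM : M.toUniformSpace.toTopologicalSpace
      = @Pi.topologicalSpace ℕ (fun _ => Y) (fun m => (d m).toUniformSpace.toTopologicalSpace) := rfl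
  have : dY.toUniformSpace.toTopologicalSpace
      = TopologicalSpace.induced (fun (y : Y) (_ : ℕ) => y) M.toUniformSpace.toTopologicalSpace := rfl
  rw [this, hM]
  simp only [Pi.topologicalSpace, induced_iInf, induced_compose]
  refine iInf_congr fun m => ?_
  have : ((fun f : ℕ → Y => f m) ∘ fun (y : Y) (_ : ℕ) => y) = id := rfl
  rw [this]
  exact (@induced_id Y ((d m).toUniformSpace.toTopologicalSpace)).trans (hd m)

theorem stmt11 {Y : Type*} (τ : TopologicalSpace Y) (σ : ℕ → TopologicalSpace Y)
    (hcoarse : ∀ m, ∀ U, (σ m).IsOpen U → τ.IsOpen U)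
    (hmetr : ∀ m, @TopologicalSpace.MetrizableSpace Y (σ m)) :
    ∃ σ' : TopologicalSpace Y,
      (∀ U, σ'.IsOpen U → τ.IsOpen U) ∧
      (∀ m, ∀ U, (σ m).IsOpen U → σ'.IsOpen U) ∧
      @TopologicalSpace.MetrizableSpace Y σ' := by
  refine ⟨⨅ m, σ m, ?_, ?_, ?_⟩
  · intro U hU
    have hle : τ ≤ ⨅ m, σ m := le_iInf fun m => by
      rw [TopologicalSpace.le_def]; exact fun V hV => hcoarse m V hV
    exact hle U hU
  · intro m U hU
    exact (iInf_le σ m : (⨅ m, σ m) ≤ σ m) U hU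
  · exact aux_metr σ hmetr
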